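/- Let K ⊆ ℝⁿ be closed and x : [t₁, t₂] → ℝⁿ absolutely continuous. If the derivative x'(t) belongs to the external contingent cone E_K(x(t)) for almost all t ∈ (t₁, t₂), then the function t ↦ |x(t)|_K is nonincreasing on [t₁, t₂]. -/

import Mathlib

open Set Filter MeasureTheory

/-- Absolute continuity of a function on the interval `[a, b]`. -/
def AbsolutelyContinuousOnInterval' {X : Type*} [PseudoMetricSpace X]
    (f : ℝ → X) (a b : ℝ) : Prop :=
  ∀ ε > (0 : ℝ), ∃ δ > (0 : ℝ), ∀ (k : ℕ) (s t : Fin k → ℝ),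
    (∀ i, s i ∈ Set.Icc a b ∧ t i ∈ Set.Icc a b ∧ s i ≤ t i) →
    (Pairwise fun i j => Disjoint (Set.Ioo (s i) (t i)) (Set.Ioo (s j) (t j))) →
    (∑ i, (t i - s i)) < δ → (∑ i, dist (f (s i)) (f (t i))) < ε

/-- The external contingent cone of `K` at `z`. -/
def externalCone {n : ℕ} (K : Set (EuclideanSpace ℝ (Fin n)))
    (z : EuclideanSpace ℝ (Fin n)) : Set (EuclideanSpace ℝ (Fin n)) :=
  {v | Filter.liminf (fun h : ℝ => (Metric.infDist (z + h • v) K - Metric.infDist z K) / h)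
      (nhdsWithin 0 (Set.Ioi 0)) ≤ 0}

open Metric in
lemma dini_freq {n : ℕ} {K : Set (EuclideanSpace ℝ (Fin n))}
    {x x' : ℝ → EuclideanSpace ℝ (Fin n)} {c ε : ℝ} (hε : 0 < ε)
    (hx : HasDerivAt x (x' c) c) (hcone : x' c ∈ externalCone K (x c)) :
    ∃ᶠ h in nhdsWithin (0:ℝ) (Set.Ioi 0),
      infDist (x (c + h)) K < infDist (x c) K + ε * h := by
  set z := x c with hz
  set v := x' c with hv
  set u : ℝ → ℝ := fun h => (infDist (z + h • v) K - infDist z K) / h with hu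
  have hmem : ∀ᶠ h in nhdsWithin (0:ℝ) (Set.Ioi 0), h ∈ Set.Ioi (0:ℝ) :=
    eventually_mem_nhdsWithin
  have hub : ∀ᶠ h in nhdsWithin (0:ℝ) (Set.Ioi 0), u h ≤ ‖v‖ := by
    filter_upwards [hmem] with h hh
    have h1 : infDist (z + h • v) K ≤ infDist z K + dist (z + h • v) z :=
      infDist_le_infDist_add_dist
    have h2 : dist (z + h • v) z = h * ‖v‖ := by
      rw [dist_eq_norm, add_sub_cancel_left, norm_smul, Real.norm_eq_abs,
        abs_of_pos hh]
    rw [hu, div_le_iff₀ hh]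
    have := h2 ▸ h1
    nlinarith [this]
  have hcob : IsCoboundedUnder (· ≥ ·) (nhdsWithin (0:ℝ) (Set.Ioi 0)) u :=
    IsBoundedUnder.isCoboundedUnder_ge ⟨‖v‖, hub⟩
  have hfreq : ∃ᶠ h in nhdsWithin (0:ℝ) (Set.Ioi 0), u h < ε / 2 :=
    frequently_lt_of_liminf_lt hcob (lt_of_le_of_lt hcone (half_pos hε))
  have hlo : (fun h : ℝ => x (c + h) - z - h • v) =o[nhds (0:ℝ)] fun h => h :=
    hasDerivAt_iff_isLittleO_nhds_zero.1 hx
  have hev : ∀ᶠ h in nhdsWithin (0:ℝ) (Set.Ioi 0),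
      ‖x (c + h) - z - h • v‖ ≤ ε / 2 * ‖h‖ :=
    (hlo.def (half_pos hε)).filter_mono nhdsWithin_le_nhds
  refine ((hfreq.and_eventually hev).and_eventually hmem).mono ?_
  rintro h ⟨⟨h1, h2⟩, h3⟩
  have hh : (0:ℝ) < h := h3
  have e1 : infDist (x (c + h)) K ≤ infDist (z + h • v) K + dist (x (c + h)) (z + h • v) :=
    infDist_le_infDist_add_dist
  have e2 : dist (x (c + h)) (z + h • v) ≤ ε / 2 * h := by
    rw [dist_eq_norm]
    calc ‖x (c + h) - (z + h • v)‖ = ‖x (c + h) - z - h • v‖ := by rw [sub_sub]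
      _ ≤ ε / 2 * ‖h‖ := h2
      _ = ε / 2 * h := by rw [Real.norm_eq_abs, abs_of_pos hh]
  have e3 : infDist (z + h • v) K < infDist z K + ε / 2 * h := by
    have := (div_lt_iff₀ hh).1 h1
    linarith
  calc infDist (x (c + h)) K ≤ infDist (z + h • v) K + ε / 2 * h := by linarith
    _ < infDist z K + ε / 2 * h + ε / 2 * h := by linarith
    _ = infDist z K + ε * h := by ring
theorem stmt_14 {n : ℕ} (K : Set (EuclideanSpace ℝ (Fin n))) (hK : IsClosed K)
    (t₁ t₂ : ℝ) (hlt : t₁ ≤ t₂)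
    (x : ℝ → EuclideanSpace ℝ (Fin n))
    (x' : ℝ → EuclideanSpace ℝ (Fin n))
    (hAC : AbsolutelyContinuousOnInterval' x t₁ t₂)
    (hderiv : ∀ᵐ t ∂(volume.restrict (Set.Ioo t₁ t₂)),
      HasDerivAt x (x' t) t ∧ x' t ∈ externalCone K (x t)) :
    AntitoneOn (fun t => Metric.infDist (x t) K) (Set.Icc t₁ t₂) := by
  classical
  set f : ℝ → ℝ := fun t => Metric.infDist (x t) K with hfdef
  intro a ha b hb hab
  rcases hab.eq_or_lt with rfl | hlt'
  · exact le_rfl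
  show f b ≤ f a
  have hfd : ∀ u v : ℝ, dist (f u) (f v) ≤ dist (x u) (x v) := fun u v => by
    simpa using (Metric.lipschitz_infDist_pt K).dist_le_mul (x u) (x v)
  -- continuity of f on [t₁, t₂]
  have hcont : ∀ η > (0:ℝ), ∃ δ > (0:ℝ), ∀ u v : ℝ, u ∈ Set.Icc t₁ t₂ → v ∈ Set.Icc t₁ t₂ →
      u ≤ v → v - u < δ → dist (f u) (f v) < η := by
    intro η hη
    obtain ⟨δ, hδ, H⟩ := hAC η hη
    refine ⟨δ, hδ, fun u v hu hv huv hd => ?_⟩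
    have h1 := H 1 (fun _ => u) (fun _ => v) (fun _ => ⟨hu, hv, huv⟩)
      (fun i j hij => absurd (Subsingleton.elim i j) hij)
      (by simpa using hd)
    calc dist (f u) (f v) ≤ dist (x u) (x v) := hfd u v
      _ < η := by simpa using h1
  -- key estimate
  have key : ∀ ε : ℝ, 0 < ε → f b ≤ f a + ε * (b - a) + ε := by
    intro ε hε
    obtain ⟨δ, hδ, HAC⟩ := hAC ε hε
    set B : Set ℝ :=
      {t | ¬ (HasDerivAt x (x' t) t ∧ x' t ∈ externalCone K (x t))} ∩ Set.Ioo t₁ t₂ with hB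
    have hBnull : volume B = 0 := by
      have h0 := hderiv
      rw [MeasureTheory.ae_iff, MeasureTheory.Measure.restrict_apply' measurableSet_Ioo] at h0
      exact h0
    have hWnull : volume (B ∪ {a}) = 0 :=
      measure_union_null hBnull (Real.volume_singleton)
    obtain ⟨U, hWU, hUopen, hUvol⟩ := Set.exists_isOpen_lt_of_lt (B ∪ {a}) (ENNReal.ofReal δ)
      (by rw [hWnull]; exact ENNReal.ofReal_pos.2 hδ)
    set A : ℝ → Set ℝ := fun t => { r | ∃ (k : ℕ) (s e : Fin k → ℝ),
      (∀ i, a ≤ s i ∧ s i ≤ e i ∧ e i ≤ t ∧ e i ≤ b) ∧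
      (∀ i, Set.Ioo (s i) (e i) ⊆ U) ∧
      (Pairwise fun i j => Disjoint (Set.Ioo (s i) (e i)) (Set.Ioo (s j) (e j))) ∧
      r = ∑ i, dist (f (s i)) (f (e i)) } with hA
    have hA0 : ∀ t, (0:ℝ) ∈ A t := fun t =>
      ⟨0, Fin.elim0, Fin.elim0, fun i => i.elim0, fun i => i.elim0,
        fun i j _ => i.elim0, by simp⟩
    have hAle : ∀ t, ∀ r ∈ A t, r < ε := by
      rintro t r ⟨k, s, e, h1, h2, h3, rfl⟩
      have hlen : (∑ i, (e i - s i)) < δ := by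
        have e1 : ENNReal.ofReal (∑ i, (e i - s i)) = ∑ i, ENNReal.ofReal (e i - s i) :=
          ENNReal.ofReal_sum_of_nonneg (fun i _ => sub_nonneg.2 (h1 i).2.1)
        have e2 : (∑ i, ENNReal.ofReal (e i - s i)) = volume (⋃ i, Set.Ioo (s i) (e i)) := by
          rw [measure_iUnion h3 (fun i => measurableSet_Ioo), tsum_fintype]
          simp [Real.volume_Ioo]
        have e3 : volume (⋃ i, Set.Ioo (s i) (e i)) < ENNReal.ofReal δ :=
          lt_of_le_of_lt (measure_mono (Set.iUnion_subset h2)) hUvol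
        exact (ENNReal.ofReal_lt_ofReal_iff hδ).1 (by rw [e1, e2]; exact e3)
      have hAC' := HAC k s e
        (fun i => ⟨⟨ha.1.trans (h1 i).1, ((h1 i).2.1.trans ((h1 i).2.2.2)).trans hb.2⟩,
          ⟨ha.1.trans ((h1 i).1.trans (h1 i).2.1), (h1 i).2.2.2.trans hb.2⟩, (h1 i).2.1⟩)
        h3 hlen
      calc (∑ i, dist (f (s i)) (f (e i))) ≤ ∑ i, dist (x (s i)) (x (e i)) :=
            Finset.sum_le_sum (fun i _ => hfd _ _)
        _ < ε := hAC'
    have hAbdd : ∀ t, BddAbove (A t) := fun t => ⟨ε, fun r hr => (hAle t r hr).le⟩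
    set g : ℝ → ℝ := fun t => sSup (A t) with hg
    have hgmono : ∀ {t t' : ℝ}, t ≤ t' → g t ≤ g t' := by
      intro t t' htt'
      refine csSup_le_csSup (hAbdd t') ⟨0, hA0 t⟩ ?_
      rintro r ⟨k, s, e, h1, h2, h3, h4⟩
      exact ⟨k, s, e, fun i => ⟨(h1 i).1, (h1 i).2.1, (h1 i).2.2.1.trans htt', (h1 i).2.2.2⟩,
        h2, h3, h4⟩
    have hg0 : ∀ t, 0 ≤ g t := fun t => le_csSup (hAbdd t) (hA0 t)
    have hgε : ∀ t, g t ≤ ε := fun t => csSup_le ⟨0, hA0 t⟩ (fun r hr => (hAle t r hr).le)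
    set S : Set ℝ := {t ∈ Set.Icc a b | f t ≤ f a + ε * (t - a) + g t} with hS
    have haS : a ∈ S := ⟨⟨le_rfl, hlt'.le⟩, by
      have := hg0 a; simp only [sub_self, mul_zero]; linarith⟩
    have hSbdd : BddAbove S := ⟨b, fun t ht => ht.1.2⟩
    set c := sSup S with hc
    have hac : a ≤ c := le_csSup hSbdd haS
    have hcb : c ≤ b := csSup_le ⟨a, haS⟩ (fun t ht => ht.1.2)
    have hcmem : c ∈ Set.Icc t₁ t₂ := ⟨ha.1.trans hac, hcb.trans hb.2⟩
    have hcS : f c ≤ f a + ε * (c - a) + g c := by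
      refine le_of_forall_pos_le_add fun η hη => ?_
      obtain ⟨δ₂, hδ₂, H₂⟩ := hcont η hη
      obtain ⟨v, hvS, hv⟩ := exists_lt_of_lt_csSup ⟨a, haS⟩
        (show c - δ₂ < c by linarith)
      have hvc : v ≤ c := le_csSup hSbdd hvS
      have hvt : v ∈ Set.Icc t₁ t₂ := ⟨ha.1.trans hvS.1.1, hvS.1.2.trans hb.2⟩
      have hd := H₂ v c hvt hcmem hvc (by linarith)
      have hfc : f c - f v ≤ dist (f v) (f c) := by
        rw [dist_comm, Real.dist_eq]; exact le_abs_self _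
      have hmul : ε * (v - a) ≤ ε * (c - a) :=
        mul_le_mul_of_nonneg_left (by linarith) hε.le
      have := hvS.2
      have := hgmono hvc
      linarith
    have hceq : c = b := by
      by_contra hne
      have hcb' : c < b := lt_of_le_of_ne hcb hne
      by_cases hcU : c ∈ U
      · obtain ⟨r, hr, hball⟩ := Metric.isOpen_iff.1 hUopen c hcU
        set t := min (c + r) b with ht
        have hct : c < t := lt_min (by linarith) hcb'
        have hsub : Set.Ioo c t ⊆ U := by
          intro y hy
          apply hball
          rw [Metric.mem_ball, Real.dist_eq, abs_lt]
          have := hy.2.trans_le (min_le_left _ _)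
          constructor <;> [linarith [hy.1]; linarith]
        have hft : f t ≤ f c + dist (f c) (f t) := by
          have : f t - f c ≤ dist (f c) (f t) := by
            rw [dist_comm, Real.dist_eq]; exact le_abs_self _
          linarith
        have hgstep : g c + dist (f c) (f t) ≤ g t := by
          have hstep : ∀ v ∈ A c, v + dist (f c) (f t) ≤ g t := by
            rintro v ⟨k, s, e, h1, h2, h3, rfl⟩
            refine le_csSup (hAbdd t) ⟨k+1, Fin.cons c s, Fin.cons t e, ?_, ?_, ?_, ?_⟩
            · intro i
              induction i using Fin.cases with
              | zero =>
                simp only [Fin.cons_zero]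
                exact ⟨hac, hct.le, le_rfl, min_le_right _ _⟩
              | succ j =>
                simp only [Fin.cons_succ]
                exact ⟨(h1 j).1, (h1 j).2.1, (h1 j).2.2.1.trans hct.le, (h1 j).2.2.2⟩
            · intro i
              induction i using Fin.cases with
              | zero => simpa only [Fin.cons_zero] using hsub
              | succ j => simpa only [Fin.cons_succ] using h2 j
            · intro i j hij
              induction i using Fin.cases with
              | zero =>
                induction j using Fin.cases with
                | zero => exact absurd rfl hij
                | succ j' =>
                  simp only [Fin.cons_zero, Fin.cons_succ]
                  refine Set.disjoint_left.2 fun y hy hy' => ?_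
                  exact absurd (hy'.2.trans_le (h1 j').2.2.1) (not_lt.2 hy.1.le)
              | succ i' =>
                induction j using Fin.cases with
                | zero =>
                  simp only [Fin.cons_zero, Fin.cons_succ]
                  refine Set.disjoint_left.2 fun y hy hy' => ?_
                  exact absurd (hy.2.trans_le (h1 i').2.2.1) (not_lt.2 hy'.1.le)
                | succ j' =>
                  simp only [Fin.cons_succ]
                  exact h3 (fun hh => hij (congrArg Fin.succ hh))
            · rw [Fin.sum_univ_succ]
              simp only [Fin.cons_zero, Fin.cons_succ]
              ring
          have h2' : g c ≤ g t - dist (f c) (f t) :=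
            csSup_le ⟨0, hA0 c⟩ (fun v hv => by linarith [hstep v hv])
          linarith
        have htS : t ∈ S := by
          refine ⟨⟨hac.trans hct.le, min_le_right _ _⟩, ?_⟩
          have hmul : ε * (c - a) ≤ ε * (t - a) :=
            mul_le_mul_of_nonneg_left (by linarith) hε.le
          linarith
        have := le_csSup hSbdd htS
        linarith
      · have hcB : c ∉ B ∪ {a} := fun h => hcU (hWU h)
        have hca : a < c := by
          rcases hac.eq_or_lt with h | h
          · exact absurd (Or.inr (Set.mem_singleton_iff.2 h.symm)) hcB
          · exact h
        have hcio : c ∈ Set.Ioo t₁ t₂ := ⟨lt_of_le_of_lt ha.1 hca, lt_of_lt_of_le hcb' hb.2⟩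
        have hP : HasDerivAt x (x' c) c ∧ x' c ∈ externalCone K (x c) := by
          by_contra h
          exact hcB (Or.inl ⟨h, hcio⟩)
        have hfreq := dini_freq hε hP.1 hP.2
        have hev : ∀ᶠ h in nhdsWithin (0:ℝ) (Set.Ioi 0), h ∈ Set.Ioo (0:ℝ) (b - c) :=
          Ioo_mem_nhdsGT_of_mem ⟨le_rfl, by linarith⟩
        obtain ⟨h, hfh, hh⟩ := (hfreq.and_eventually hev).exists
        have hchS : c + h ∈ S := by
          refine ⟨⟨by linarith [hh.1], by linarith [hh.2]⟩, ?_⟩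
          have hgm := hgmono (show c ≤ c + h by linarith [hh.1])
          have hfh' : f (c + h) < f c + ε * h := hfh
          have : ε * (c + h - a) = ε * (c - a) + ε * h := by ring
          linarith
        have := le_csSup hSbdd hchS
        linarith [hh.1]
    rw [hceq] at hcS
    linarith [hgε b]
  refine le_of_forall_pos_le_add fun η hη => ?_
  have hba : (0:ℝ) < b - a + 1 := by linarith
  have h1 : 0 < η / (b - a + 1) := div_pos hη hba
  have h2 := key _ h1
  have h3 : η / (b - a + 1) * (b - a) + η / (b - a + 1) = η := by
    field_simp
  linarith
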